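/- Let s* ∈ ℤ with 2 ≤ s* ≤ N − 1 and Δ ∈ ℝ. If Δ ≥ max{0, B₋(s*), B₊(s*)}, then there exists a minimizer s′ of the function s ↦ v_U(s; δ+Δ, φ) over {1, …, N} with s′ > s*. -/

import Mathlib

open Finset

/-- `v_U(s; δ, φ) = κσ²(1 − ρ + ρs + δ)/s − (Σ_{i=1}^s r̄_[i])/s + φs`. -/
noncomputable def vU (κ σ ρ δ φ : ℝ) (r : ℕ → ℝ) (s : ℕ) : ℝ :=
  κ * σ ^ 2 * (1 - ρ + ρ * s + δ) / s - (∑ i ∈ Finset.Icc 1 s, r i) / s + φ * s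

/-- `B₋(s*) = ρ − δ − 1 − (1/(κσ²)) min_{1 ≤ l < s*}
  ((l Σ_{i≤s*} r̄_[i] − s* Σ_{i≤l} r̄_[i])/(s* − l) − φ s* l)`. -/
noncomputable def Bminus (κ σ ρ δ φ : ℝ) (r : ℕ → ℝ) (sstar : ℕ) : ℝ :=
  ρ - δ - 1 - (1 / (κ * σ ^ 2)) *
    sInf {y : ℝ | ∃ l : ℕ, 1 ≤ l ∧ l < sstar ∧
      y = ((l : ℝ) * (∑ i ∈ Finset.Icc 1 sstar, r i)
            - (sstar : ℝ) * (∑ i ∈ Finset.Icc 1 l, r i)) / ((sstar : ℝ) - (l : ℝ))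
          - φ * (sstar : ℝ) * (l : ℝ)}

/-- `B₊(s*) = ρ − δ − 1 + (1/(κσ²)) min_{s* < l ≤ N}
  ((l Σ_{i≤s*} r̄_[i] − s* Σ_{i≤l} r̄_[i])/(l − s*) + φ s* l)`. -/
noncomputable def Bplus (N : ℕ) (κ σ ρ δ φ : ℝ) (r : ℕ → ℝ) (sstar : ℕ) : ℝ :=
  ρ - δ - 1 + (1 / (κ * σ ^ 2)) *
    sInf {y : ℝ | ∃ l : ℕ, sstar < l ∧ l ≤ N ∧
      y = ((l : ℝ) * (∑ i ∈ Finset.Icc 1 sstar, r i)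
            - (sstar : ℝ) * (∑ i ∈ Finset.Icc 1 l, r i)) / ((l : ℝ) - (sstar : ℝ))
          + φ * (sstar : ℝ) * (l : ℝ)}

/-- Key arithmetic lemma: if `X ≥ (bS − aT)/(b−a) + φ'ab` with `0 < a < b`, then
`X/b − T/b + φ'b ≤ X/a − S/a + φ'a`. -/
lemma g_le_aux (X S T φ' a b : ℝ) (ha : 0 < a) (hab : a < b)
    (hX : (b * S - a * T) / (b - a) + φ' * a * b ≤ X) :
    X / b - T / b + φ' * b ≤ X / a - S / a + φ' * a := by
  have hb : 0 < b := ha.trans hab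
  have hba : 0 < b - a := by linarith
  have h1 : (b * S - a * T) / (b - a) ≤ X - φ' * a * b := by linarith
  have key : b * S - a * T ≤ (X - φ' * a * b) * (b - a) := (div_le_iff₀ hba).mp h1
  rw [← sub_nonneg]
  have expand : (X / a - S / a + φ' * a) - (X / b - T / b + φ' * b)
      = ((X - φ' * a * b) * (b - a) - (b * S - a * T)) / (a * b) := by
    field_simp
    ring
  rw [expand]
  apply div_nonneg (by linarith) (by positivity)

/-- Rewrite of `vU` for positive `s`. -/
lemma vU_eq (κ σ ρ δ' φ : ℝ) (r : ℕ → ℝ) (s : ℕ) (hs : 1 ≤ s) :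
    vU κ σ ρ δ' φ r s
      = κ * σ ^ 2 * (1 - ρ + δ') / s - (∑ i ∈ Finset.Icc 1 s, r i) / s + φ * s
        + κ * σ ^ 2 * ρ := by
  have hs0 : (s : ℝ) ≠ 0 := Nat.cast_ne_zero.mpr (by omega)
  unfold vU
  field_simp
  ring

/-- Proposition 4, condition C3: if `Δ ≥ max{0, B₋(s*), B₊(s*)}`
then there is a minimizer `s′` of `s ↦ v_U(s; δ+Δ, φ)` over `{1,…,N}` with `s′ > s*`. -/
theorem stmt12 (N : ℕ) (hN : 3 ≤ N) (κ σ ρ δ φ : ℝ)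
    (hκ : 0 < κ) (hσ : 0 < σ) (hρ1 : -1 < ρ) (hρ2 : ρ < 1) (hδ : 0 ≤ δ) (hφ : 0 < φ)
    (r : ℕ → ℝ) (hr : ∀ i j : ℕ, 1 ≤ i → i ≤ j → j ≤ N → r j ≤ r i)
    (sstar : ℕ) (hs1 : 2 ≤ sstar) (hs2 : sstar ≤ N - 1)
    (Δ : ℝ)
    (hΔge : max 0 (max (Bminus κ σ ρ δ φ r sstar) (Bplus N κ σ ρ δ φ r sstar)) ≤ Δ) :
    ∃ s' : ℕ, 1 ≤ s' ∧ s' ≤ N ∧ sstar < s' ∧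
      ∀ s : ℕ, 1 ≤ s → s ≤ N →
        vU κ σ ρ (δ + Δ) φ r s' ≤ vU κ σ ρ (δ + Δ) φ r s := by
  have hc : (0:ℝ) < κ * σ ^ 2 := by positivity
  set c : ℝ := κ * σ ^ 2 with hcdef
  set X : ℝ := c * (1 - ρ + (δ + Δ)) with hXdef
  set A : ℝ := ∑ i ∈ Finset.Icc 1 sstar, r i with hAdef
  have hsN : sstar + 1 ≤ N := by omega
  -- comparison: for 1 ≤ a < b ≤ N, a condition implying vU b ≤ vU a
  have hcomp : ∀ a b : ℕ, 1 ≤ a → a < b →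
      ((b : ℝ) * (∑ i ∈ Finset.Icc 1 a, r i) - (a : ℝ) * (∑ i ∈ Finset.Icc 1 b, r i))
        / ((b : ℝ) - (a : ℝ)) + φ * a * b ≤ X →
      vU κ σ ρ (δ + Δ) φ r b ≤ vU κ σ ρ (δ + Δ) φ r a := by
    intro a b ha hab hle
    have ha' : (0:ℝ) < a := by exact_mod_cast ha
    have hab' : (a:ℝ) < b := by exact_mod_cast hab
    rw [vU_eq κ σ ρ (δ + Δ) φ r a ha, vU_eq κ σ ρ (δ + Δ) φ r b (by omega)]
    have := g_le_aux X (∑ i ∈ Finset.Icc 1 a, r i) (∑ i ∈ Finset.Icc 1 b, r i)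
      φ a b ha' hab' hle
    linarith
  -- the B₊ part: exists l₊ > sstar with vU l₊ ≤ vU sstar
  have hBp : Bplus N κ σ ρ δ φ r sstar ≤ Δ :=
    le_trans (le_trans (le_max_right _ _) (le_max_right _ _)) hΔge
  have hBm : Bminus κ σ ρ δ φ r sstar ≤ Δ :=
    le_trans (le_trans (le_max_left _ _) (le_max_right _ _)) hΔge
  set fP : ℕ → ℝ := fun l =>
      ((l : ℝ) * A - (sstar : ℝ) * (∑ i ∈ Finset.Icc 1 l, r i)) / ((l : ℝ) - (sstar : ℝ))
        + φ * (sstar : ℝ) * (l : ℝ) with hfP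
  set fM : ℕ → ℝ := fun l =>
      ((l : ℝ) * A - (sstar : ℝ) * (∑ i ∈ Finset.Icc 1 l, r i)) / ((sstar : ℝ) - (l : ℝ))
        - φ * (sstar : ℝ) * (l : ℝ) with hfM
  have hSPeq : {y : ℝ | ∃ l : ℕ, sstar < l ∧ l ≤ N ∧ y = fP l}
      = fP '' ↑(Finset.Ioc sstar N) := by
    ext y
    simp only [Set.mem_setOf_eq, Set.mem_image, Finset.coe_Ioc, Set.mem_Ioc]
    constructor
    · rintro ⟨l, h1, h2, h3⟩; exact ⟨l, ⟨h1, h2⟩, h3.symm⟩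
    · rintro ⟨l, ⟨h1, h2⟩, h3⟩; exact ⟨l, h1, h2, h3.symm⟩
  have hSMeq : {y : ℝ | ∃ l : ℕ, 1 ≤ l ∧ l < sstar ∧ y = fM l}
      = fM '' ↑(Finset.Ico 1 sstar) := by
    ext y
    simp only [Set.mem_setOf_eq, Set.mem_image, Finset.coe_Ico, Set.mem_Ico]
    constructor
    · rintro ⟨l, h1, h2, h3⟩; exact ⟨l, ⟨h1, h2⟩, h3.symm⟩
    · rintro ⟨l, ⟨h1, h2⟩, h3⟩; exact ⟨l, h1, h2, h3.symm⟩
  have hSPfin : ({y : ℝ | ∃ l : ℕ, sstar < l ∧ l ≤ N ∧ y = fP l}).Finite := by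
    rw [hSPeq]; exact (Finset.finite_toSet _).image _
  have hSMfin : ({y : ℝ | ∃ l : ℕ, 1 ≤ l ∧ l < sstar ∧ y = fM l}).Finite := by
    rw [hSMeq]; exact (Finset.finite_toSet _).image _
  have hSPne : ({y : ℝ | ∃ l : ℕ, sstar < l ∧ l ≤ N ∧ y = fP l}).Nonempty :=
    ⟨fP (sstar + 1), ⟨sstar + 1, by omega, hsN, rfl⟩⟩
  -- from Bplus ≤ Δ: sInf SP ≤ X
  have hXP : sInf {y : ℝ | ∃ l : ℕ, sstar < l ∧ l ≤ N ∧ y = fP l} ≤ X := by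
    have h : ρ - δ - 1 + (1 / c) * sInf {y : ℝ | ∃ l : ℕ, sstar < l ∧ l ≤ N ∧ y = fP l} ≤ Δ := hBp
    have h2 : (1 / c) * sInf {y : ℝ | ∃ l : ℕ, sstar < l ∧ l ≤ N ∧ y = fP l}
        ≤ Δ - ρ + δ + 1 := by linarith
    calc sInf {y : ℝ | ∃ l : ℕ, sstar < l ∧ l ≤ N ∧ y = fP l}
        = c * ((1 / c) * sInf {y : ℝ | ∃ l : ℕ, sstar < l ∧ l ≤ N ∧ y = fP l}) := by
          field_simp
      _ ≤ c * (Δ - ρ + δ + 1) := by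
          exact mul_le_mul_of_nonneg_left h2 hc.le
      _ = X := by rw [hXdef]; ring
  -- find the minimizer element of SP
  obtain ⟨lP, hlP1, hlP2, hlPeq⟩ :=
    Set.Nonempty.csInf_mem hSPne hSPfin
  have hfPle : fP lP ≤ X := by rw [← hlPeq]; exact hXP
  have hstep1 : vU κ σ ρ (δ + Δ) φ r lP ≤ vU κ σ ρ (δ + Δ) φ r sstar := by
    apply hcomp sstar lP (by omega) hlP1
    have : φ * (sstar : ℝ) * (lP : ℝ) = φ * (lP : ℝ) * (sstar : ℝ) := by ring
    calc ((lP : ℝ) * A - (sstar : ℝ) * (∑ i ∈ Finset.Icc 1 lP, r i))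
          / ((lP : ℝ) - (sstar : ℝ)) + φ * (sstar : ℝ) * (lP : ℝ) = fP lP := rfl
      _ ≤ X := hfPle
  -- from Bminus ≤ Δ: for all 1 ≤ l < sstar, vU sstar ≤ vU l
  have hstep2 : ∀ l : ℕ, 1 ≤ l → l ≤ sstar →
      vU κ σ ρ (δ + Δ) φ r sstar ≤ vU κ σ ρ (δ + Δ) φ r l := by
    intro l hl1 hl2
    rcases eq_or_lt_of_le hl2 with h | h
    · rw [h]
    · have hmem : fM l ∈ {y : ℝ | ∃ l : ℕ, 1 ≤ l ∧ l < sstar ∧ y = fM l} := ⟨l, hl1, h, rfl⟩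
      have hInf : sInf {y : ℝ | ∃ l : ℕ, 1 ≤ l ∧ l < sstar ∧ y = fM l} ≤ fM l :=
        csInf_le hSMfin.bddBelow hmem
      have hB : ρ - δ - 1 - (1 / c) * sInf {y : ℝ | ∃ l : ℕ, 1 ≤ l ∧ l < sstar ∧ y = fM l}
          ≤ Δ := hBm
      have h2 : -(c * (Δ - ρ + δ + 1))
          ≤ sInf {y : ℝ | ∃ l : ℕ, 1 ≤ l ∧ l < sstar ∧ y = fM l} := by
        have h3 : ρ - δ - 1 - Δ ≤ (1 / c) * sInf {y : ℝ | ∃ l : ℕ, 1 ≤ l ∧ l < sstar ∧ y = fM l} := by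
          linarith
        have h4 := mul_le_mul_of_nonneg_left h3 hc.le
        calc -(c * (Δ - ρ + δ + 1)) = c * (ρ - δ - 1 - Δ) := by ring
          _ ≤ c * ((1 / c) * sInf {y : ℝ | ∃ l : ℕ, 1 ≤ l ∧ l < sstar ∧ y = fM l}) := h4
          _ = sInf {y : ℝ | ∃ l : ℕ, 1 ≤ l ∧ l < sstar ∧ y = fM l} := by field_simp
      have h5 : -(c * (Δ - ρ + δ + 1)) ≤ fM l := le_trans h2 hInf
      apply hcomp l sstar hl1 h
      have heq : ((sstar : ℝ) * (∑ i ∈ Finset.Icc 1 l, r i) - (l : ℝ) * A)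
          / ((sstar : ℝ) - (l : ℝ)) + φ * (l : ℝ) * (sstar : ℝ) = -(fM l) := by
        rw [hfM]
        simp only
        ring
      rw [hAdef] at heq
      rw [heq]
      have : X = c * (Δ - ρ + δ + 1) := by rw [hXdef]; ring
      rw [this]
      linarith
  -- pick the global minimizer over (sstar, N]
  obtain ⟨s', hs'mem, hs'min⟩ :=
    Finset.exists_min_image (Finset.Ioc sstar N) (vU κ σ ρ (δ + Δ) φ r)
      ⟨sstar + 1, by rw [Finset.mem_Ioc]; omega⟩
  rw [Finset.mem_Ioc] at hs'mem
  refine ⟨s', by omega, hs'mem.2, hs'mem.1, ?_⟩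
  intro s hs1' hs2'
  by_cases hcase : sstar < s
  · exact hs'min s (by rw [Finset.mem_Ioc]; omega)
  · push_neg at hcase
    calc vU κ σ ρ (δ + Δ) φ r s' ≤ vU κ σ ρ (δ + Δ) φ r lP :=
          hs'min lP (by rw [Finset.mem_Ioc]; omega)
      _ ≤ vU κ σ ρ (δ + Δ) φ r sstar := hstep1
      _ ≤ vU κ σ ρ (δ + Δ) φ r s := hstep2 s hs1' hcase
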